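/- Under the AGG(ν) tail condition (ν > 0), the sequence c_p := u_{p log p}/u_p − 1 converges to 0 as p → ∞, where u_q := F⁻¹(1 − 1/q). -/

import Mathlib

open Filter Real

/-- The generalized (left-continuous) inverse of a CDF: F⁻¹(u) = inf {x : F(x) ≥ u}. -/
noncomputable def genInv (F : ℝ → ℝ) (u : ℝ) : ℝ := sInf {x : ℝ | u ≤ F x}

/-- The (1 − 1/q)-quantile of F. -/
noncomputable def quantileSeq (F : ℝ → ℝ) (q : ℝ) : ℝ := genInv F (1 - 1 / q)

/-- The AGG(ν) tail condition: log F̄(x) ~ −x^ν/ν as x → ∞. -/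
def AGGTail (F : ℝ → ℝ) (ν : ℝ) : Prop :=
  ∀ ε > (0:ℝ), ∃ C : ℝ, ∀ x ≥ C,
    -(1 + ε) * x ^ ν / ν ≤ Real.log (1 - F x) ∧
    Real.log (1 - F x) ≤ -(1 - ε) * x ^ ν / ν

lemma AGG_Sq_nonempty (F : ℝ → ℝ) (h1 : Tendsto F atTop (nhds 1)) {u : ℝ} (hu : u < 1) :
    {x : ℝ | u ≤ F x}.Nonempty := by
  obtain ⟨x, hx⟩ := (h1.eventually (eventually_gt_nhds hu)).exists
  exact ⟨x, hx.le⟩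

lemma AGG_Sq_bddBelow (F : ℝ → ℝ) (hmono : Monotone F) (h0 : Tendsto F atBot (nhds 0))
    {u : ℝ} (hu : 0 < u) : BddBelow {x : ℝ | u ≤ F x} := by
  obtain ⟨B, hB⟩ := eventually_atBot.mp (h0.eventually (eventually_lt_nhds hu))
  refine ⟨B, fun x hx => ?_⟩
  by_contra hxB
  push_neg at hxB
  exact absurd hx (not_le.mpr (lt_of_le_of_lt (hmono hxB.le) (hB B le_rfl)))

/-- Main sandwich lemma: for all large `q`, the quantile `u_q` lies between
`(ν log q/(1+ε))^{1/ν}` and `(ν log q/(1-ε))^{1/ν}`. -/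
lemma AGG_quantile_bounds (F : ℝ → ℝ) (hmono : Monotone F)
    (h0 : Tendsto F atBot (nhds 0)) (h1 : Tendsto F atTop (nhds 1))
    (ν ε : ℝ) (hν : 0 < ν) (hε : 0 < ε) (hε1 : ε < 1) (C : ℝ)
    (hC : ∀ x ≥ C, -(1 + ε) * x ^ ν / ν ≤ Real.log (1 - F x) ∧
      Real.log (1 - F x) ≤ -(1 - ε) * x ^ ν / ν) :
    ∃ Q : ℝ, ∀ q ≥ Q,
      (ν * Real.log q / (1 + ε)) ^ (1/ν) ≤ quantileSeq F q ∧
      quantileSeq F q ≤ (ν * Real.log q / (1 - ε)) ^ (1/ν) := by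
  set C' : ℝ := max C 1 with hC'def
  have hC'1 : (1:ℝ) ≤ C' := le_max_right _ _
  have hC'0 : (0:ℝ) < C' := lt_of_lt_of_le one_pos hC'1
  -- sandwich for the tail
  have hsand : ∀ x ≥ C', 0 < 1 - F x ∧
      Real.exp (-(1 + ε) * x ^ ν / ν) ≤ 1 - F x ∧
      1 - F x ≤ Real.exp (-(1 - ε) * x ^ ν / ν) := by
    intro x hx
    have hx0 : (0:ℝ) < x := lt_of_lt_of_le hC'0 hx
    obtain ⟨hlo, hhi⟩ := hC x (le_trans (le_max_left _ _) hx)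
    have hxν : (0:ℝ) < x ^ ν := Real.rpow_pos_of_pos hx0 ν
    have hneg : -(1 - ε) * x ^ ν / ν < 0 := by
      apply div_neg_of_neg_of_pos _ hν
      nlinarith
    have hFle : F x ≤ 1 := by
      by_contra hgt
      push_neg at hgt
      obtain ⟨y, hy1, _⟩ :=
        ((h1.eventually (eventually_lt_nhds hgt)).and (eventually_ge_atTop x)).exists
      exact absurd (hmono ‹x ≤ y›) (not_le.mpr hy1)
    have hpos : 0 < 1 - F x := by
      rcases lt_or_eq_of_le (sub_nonneg.mpr hFle) with h | h
      · exact h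
      · exfalso
        rw [← h, Real.log_zero] at hhi
        linarith
    refine ⟨hpos, ?_, ?_⟩
    · calc Real.exp (-(1 + ε) * x ^ ν / ν) ≤ Real.exp (Real.log (1 - F x)) :=
            Real.exp_le_exp.mpr hlo
        _ = 1 - F x := Real.exp_log hpos
    · calc 1 - F x = Real.exp (Real.log (1 - F x)) := (Real.exp_log hpos).symm
        _ ≤ Real.exp (-(1 - ε) * x ^ ν / ν) := Real.exp_le_exp.mpr hhi
  set m : ℝ := Real.exp (-(1 + ε) * C' ^ ν / ν) with hmdef
  have hm0 : 0 < m := Real.exp_pos _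
  refine ⟨max (max 2 (2 / m)) (Real.exp ((1 - ε) * C' ^ ν / ν)), fun q hq => ?_⟩
  have hq2 : (2:ℝ) ≤ q := le_trans (le_trans (le_max_left _ _) (le_max_left _ _)) hq
  have hq1 : (1:ℝ) < q := by linarith
  have hq0 : (0:ℝ) < q := by linarith
  have hqm : 1 / q < m := by
    have h2m : 2 / m ≤ q := le_trans (le_trans (le_max_right _ _) (le_max_left _ _)) hq
    rw [div_lt_iff₀ hq0]
    rw [div_le_iff₀ hm0] at h2m
    nlinarith
  have hlogq : (1 - ε) * C' ^ ν / ν ≤ Real.log q := by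
    have := le_trans (le_max_right _ _) hq
    calc (1 - ε) * C' ^ ν / ν = Real.log (Real.exp ((1 - ε) * C' ^ ν / ν)) :=
          (Real.log_exp _).symm
      _ ≤ Real.log q := Real.log_le_log (Real.exp_pos _) this
  have hlogq0 : 0 < Real.log q := Real.log_pos hq1
  have hthr0 : 0 < 1 - 1 / q := by
    have : 1 / q < 1 := by rw [div_lt_one hq0]; linarith
    linarith
  have hthr1 : 1 - 1 / q < 1 := by
    have : 0 < 1 / q := by positivity
    linarith
  have hne : {x : ℝ | 1 - 1 / q ≤ F x}.Nonempty := AGG_Sq_nonempty F h1 hthr1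
  have hbdd : BddBelow {x : ℝ | 1 - 1 / q ≤ F x} := AGG_Sq_bddBelow F hmono h0 hthr0
  have hνne : ν ≠ 0 := ne_of_gt hν
  constructor
  · -- lower bound
    rw [quantileSeq, genInv]
    apply le_csInf hne
    intro x hx
    have hFx : 1 - F x ≤ 1 / q := by
      simp only [Set.mem_setOf_eq] at hx; linarith
    -- x must be ≥ C'
    have hxC' : C' ≤ x := by
      by_contra h
      push_neg at h
      have h1x : 1 - F C' ≤ 1 - F x := by have := hmono h.le; linarith
      have h2x : m ≤ 1 - F C' := (hsand C' le_rfl).2.1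
      linarith
    have hx0 : (0:ℝ) < x := lt_of_lt_of_le hC'0 hxC'
    obtain ⟨hpos, hlo, _⟩ := hsand x hxC'
    -- exp(-(1+ε)x^ν/ν) ≤ 1/q = exp(-log q)
    have hexp : Real.exp (-(1 + ε) * x ^ ν / ν) ≤ Real.exp (-Real.log q) := by
      rw [Real.exp_neg, Real.exp_log hq0]
      calc Real.exp (-(1 + ε) * x ^ ν / ν) ≤ 1 - F x := hlo
        _ ≤ 1 / q := hFx
        _ = q⁻¹ := one_div q
    have hineq : ν * Real.log q / (1 + ε) ≤ x ^ ν := by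
      have h' := Real.exp_le_exp.mp hexp
      rw [div_le_iff₀ hν] at h'
      rw [div_le_iff₀ (by linarith : (0:ℝ) < 1 + ε)]
      nlinarith
    calc (ν * Real.log q / (1 + ε)) ^ (1/ν) ≤ (x ^ ν) ^ (1/ν) := by
          apply Real.rpow_le_rpow (by positivity) hineq (by positivity)
      _ = x := by rw [one_div, Real.rpow_rpow_inv hx0.le hνne]
  · -- upper bound
    rw [quantileSeq, genInv]
    set U : ℝ := (ν * Real.log q / (1 - ε)) ^ (1/ν) with hUdef
    have hbase0 : 0 ≤ ν * Real.log q / (1 - ε) := by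
      apply div_nonneg (by positivity); linarith
    have hUν : U ^ ν = ν * Real.log q / (1 - ε) := by
      rw [hUdef, one_div, Real.rpow_inv_rpow hbase0 hνne]
    have hUC' : C' ≤ U := by
      have h1 : C' ^ ν ≤ ν * Real.log q / (1 - ε) := by
        rw [div_le_iff₀ hν] at hlogq
        rw [le_div_iff₀ (by linarith : (0:ℝ) < 1 - ε)]
        nlinarith
      calc C' = (C' ^ ν) ^ (1/ν) := by rw [one_div, Real.rpow_rpow_inv hC'0.le hνne]
        _ ≤ (ν * Real.log q / (1 - ε)) ^ (1/ν) :=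
            Real.rpow_le_rpow (by positivity) h1 (by positivity)
        _ = U := rfl
    apply csInf_le hbdd
    show 1 - 1 / q ≤ F U
    obtain ⟨_, _, hhi⟩ := hsand U hUC'
    have hcomp : -(1 - ε) * U ^ ν / ν = -Real.log q := by
      rw [hUν]
      have hε' : (1:ℝ) - ε ≠ 0 := by linarith
      field_simp
    have : 1 - F U ≤ 1 / q := by
      calc 1 - F U ≤ Real.exp (-(1 - ε) * U ^ ν / ν) := hhi
        _ = Real.exp (-Real.log q) := by rw [hcomp]
        _ = 1 / q := by rw [Real.exp_neg, Real.exp_log hq0, one_div]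
    linarith

theorem AGG_cp_tendsto_zero (F : ℝ → ℝ) (hmono : Monotone F)
    (hrc : ∀ x : ℝ, ContinuousWithinAt F (Set.Ici x) x)
    (h0 : Tendsto F atBot (nhds 0)) (h1 : Tendsto F atTop (nhds 1))
    (ν : ℝ) (hν : 0 < ν) (hAGG : AGGTail F ν) :
    Tendsto (fun p : ℕ =>
        quantileSeq F (p * Real.log p) / quantileSeq F p - 1) atTop (nhds 0) := by
  rw [NormedAddCommGroup.tendsto_nhds_zero]
  intro δ hδ
  set δ' : ℝ := δ / 2 with hδ'def
  have hδ'0 : 0 < δ' := by positivity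
  set A : ℝ := (1 + δ') ^ ν with hAdef
  have hA1 : 1 < A :=
    (Real.one_lt_rpow_iff_of_pos (by linarith)).mpr (Or.inl ⟨by linarith, hν⟩)
  set ε : ℝ := (A - 1) / (2 * (A + 1)) with hεdef
  have hε0 : 0 < ε := by apply div_pos <;> linarith
  have hε1 : ε < 1 := by rw [div_lt_one (by linarith)]; linarith
  set K : ℝ := A * (1 - ε) / (1 + ε) with hKdef
  have hεval : ε * (2 * (A + 1)) = A - 1 := by
    rw [hεdef]; field_simp
  have hK1 : 1 < K := by
    rw [hKdef, lt_div_iff₀ (by linarith : (0:ℝ) < 1 + ε)]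
    nlinarith [hεval, hA1, sq_nonneg (A - 1)]
  obtain ⟨C, hC⟩ := hAGG ε hε0
  obtain ⟨Q, hQ⟩ := AGG_quantile_bounds F hmono h0 h1 ν ε hν hε0 hε1 C hC
  have hνne : ν ≠ 0 := ne_of_gt hν
  -- eventual facts
  have hcast : Tendsto (fun p : ℕ => (p:ℝ)) atTop atTop := tendsto_natCast_atTop_atTop
  have hlogp : Tendsto (fun p : ℕ => Real.log p) atTop atTop :=
    Real.tendsto_log_atTop.comp hcast
  have hplogp : Tendsto (fun p : ℕ => (p:ℝ) * Real.log p) atTop atTop :=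
    hcast.atTop_mul_atTop₀ hlogp
  have E1 : ∀ᶠ p : ℕ in atTop, (p:ℝ) ≥ Q := hcast.eventually_ge_atTop Q
  have E2 : ∀ᶠ p : ℕ in atTop, (p:ℝ) * Real.log p ≥ Q := hplogp.eventually_ge_atTop Q
  have E3 : ∀ᶠ p : ℕ in atTop, (1:ℝ) ≤ Real.log p := hlogp.eventually_ge_atTop 1
  have E4 : ∀ᶠ p : ℕ in atTop, Real.log (Real.log p) ≤ (K - 1) * Real.log p := by
    have hlo := Real.isLittleO_log_id_atTop.def (show (0:ℝ) < K - 1 by linarith)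
    filter_upwards [hlogp.eventually hlo, E3] with p hp hp3
    simp only [id_eq, norm_eq_abs] at hp
    calc Real.log (Real.log p) ≤ |Real.log (Real.log p)| := le_abs_self _
      _ ≤ (K - 1) * |Real.log p| := hp
      _ = (K - 1) * Real.log p := by rw [abs_of_pos (by linarith)]
  have E5 : ∀ᶠ p : ℕ in atTop, (1:ℝ) ≤ (p:ℝ) := hcast.eventually_ge_atTop 1
  filter_upwards [E1, E2, E3, E4, E5] with p hp1 hp2 hp3 hp4 hp5
  have hp0 : (0:ℝ) < (p:ℝ) := by linarith
  have hlogp0 : (0:ℝ) < Real.log p := by linarith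
  obtain ⟨hL1, hU1⟩ := hQ (p:ℝ) hp1
  obtain ⟨hL2, hU2⟩ := hQ ((p:ℝ) * Real.log p) hp2
  set u1 : ℝ := quantileSeq F p with hu1def
  set u2 : ℝ := quantileSeq F ((p:ℝ) * Real.log p) with hu2def
  have hL1pos : 0 < (ν * Real.log p / (1 + ε)) ^ (1/ν) := by
    apply Real.rpow_pos_of_pos
    apply div_pos (by positivity); linarith
  have hu1pos : 0 < u1 := lt_of_lt_of_le hL1pos hL1
  -- monotonicity: u1 ≤ u2
  have hq12 : (p:ℝ) ≤ (p:ℝ) * Real.log p := le_mul_of_one_le_right hp0.le hp3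
  have hmono12 : u1 ≤ u2 := by
    rw [hu1def, hu2def, quantileSeq, quantileSeq, genInv, genInv]
    have hthr : 1 - 1 / (p:ℝ) ≤ 1 - 1 / ((p:ℝ) * Real.log p) := by
      have : 1 / ((p:ℝ) * Real.log p) ≤ 1 / (p:ℝ) :=
        one_div_le_one_div_of_le hp0 hq12
      linarith
    have hsub : {x : ℝ | 1 - 1 / ((p:ℝ) * Real.log p) ≤ F x} ⊆
        {x : ℝ | 1 - 1 / (p:ℝ) ≤ F x} := fun x hx => le_trans hthr hx
    apply csInf_le_csInf
    · apply AGG_Sq_bddBelow F hmono h0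
      have : 1 / (p:ℝ) < 1 := by
        rw [div_lt_one hp0]
        nlinarith [Real.log_le_sub_one_of_pos hp0]
      linarith
    · apply AGG_Sq_nonempty F h1
      have : 0 < 1 / ((p:ℝ) * Real.log p) := by positivity
      linarith
    · exact hsub
  -- key upper bound: u2 ≤ (1 + δ') * u1
  have hlogmul : Real.log ((p:ℝ) * Real.log p) = Real.log p + Real.log (Real.log p) :=
    Real.log_mul (ne_of_gt hp0) (ne_of_gt hlogp0)
  have hkey : (ν * Real.log ((p:ℝ) * Real.log p) / (1 - ε)) ^ (1/ν) ≤
      (1 + δ') * (ν * Real.log p / (1 + ε)) ^ (1/ν) := by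
    have hbound : ν * Real.log ((p:ℝ) * Real.log p) / (1 - ε) ≤
        A * (ν * Real.log p / (1 + ε)) := by
      rw [hlogmul]
      rw [div_le_iff₀ (by linarith : (0:ℝ) < 1 - ε)]
      have hKle : Real.log p + Real.log (Real.log p) ≤ K * Real.log p := by
        have : K * Real.log p = Real.log p + (K - 1) * Real.log p := by ring
        linarith
      have hKQ : K * (1 + ε) = A * (1 - ε) := by
        rw [hKdef]; field_simp
      calc ν * (Real.log p + Real.log (Real.log p)) ≤ ν * (K * Real.log p) := by
            apply mul_le_mul_of_nonneg_left hKle hν.le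
        _ = A * (ν * Real.log p / (1 + ε)) * (1 - ε) := by
            have hεne : (1:ℝ) + ε ≠ 0 := by linarith
            rw [hKdef]
            ring
    have h1δ : (1 + δ') = A ^ (1/ν) := by
      rw [hAdef, one_div, Real.rpow_rpow_inv (by linarith) hνne]
    calc (ν * Real.log ((p:ℝ) * Real.log p) / (1 - ε)) ^ (1/ν)
        ≤ (A * (ν * Real.log p / (1 + ε))) ^ (1/ν) := by
          apply Real.rpow_le_rpow _ hbound (by positivity)
          apply div_nonneg _ (by linarith : (0:ℝ) ≤ 1 - ε)
          have : 0 < Real.log ((p:ℝ) * Real.log p) := by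
            rw [hlogmul]
            have : 0 ≤ Real.log (Real.log p) := Real.log_nonneg hp3
            linarith
          positivity
      _ = A ^ (1/ν) * (ν * Real.log p / (1 + ε)) ^ (1/ν) := by
          apply Real.mul_rpow (by linarith) _
          apply div_nonneg (by positivity) (by linarith)
      _ = (1 + δ') * (ν * Real.log p / (1 + ε)) ^ (1/ν) := by rw [h1δ]
  have hu2le : u2 ≤ (1 + δ') * u1 := by
    calc u2 ≤ (ν * Real.log ((p:ℝ) * Real.log p) / (1 - ε)) ^ (1/ν) := hU2
      _ ≤ (1 + δ') * (ν * Real.log p / (1 + ε)) ^ (1/ν) := hkey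
      _ ≤ (1 + δ') * u1 := by
          apply mul_le_mul_of_nonneg_left hL1 (by linarith)
  -- conclude
  have hratio_lo : (0:ℝ) ≤ u2 / u1 - 1 := by
    rw [sub_nonneg, le_div_iff₀ hu1pos, one_mul]
    exact hmono12
  have hratio_hi : u2 / u1 - 1 ≤ δ' := by
    rw [sub_le_iff_le_add, div_le_iff₀ hu1pos]
    calc u2 ≤ (1 + δ') * u1 := hu2le
      _ = (δ' + 1) * u1 := by ring
  rw [Real.norm_eq_abs, abs_of_nonneg hratio_lo]
  linarith
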